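/- For each fixed y ∈ ℝ, as x → 0 with x ≠ 0, the point F(x⁻², yx³ + x²) tends to the finite limit (y⁴ + 2y², −u(y⁴ + y², y²)). Hence every point (y⁴ + 2y², −u(y⁴ + y², y²)) is an asymptotic value of the Pinchuk map F. -/
import Mathlib


open Filter

/-- `t = xy − 1`. -/
noncomputable def tF (x y : ℝ) : ℝ := x * y - 1

/-- `h = t(xt + 1)`. -/
noncomputable def hF (x y : ℝ) : ℝ := tF x y * (x * tF x y + 1)

/-- `f = (xt + 1)²(t² + y)`. -/
noncomputable def fF (x y : ℝ) : ℝ := (x * tF x y + 1) ^ 2 * (tF x y ^ 2 + y)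

/-- `P = f + h`. -/
noncomputable def PF (x y : ℝ) : ℝ := fF x y + hF x y

/-- The auxiliary polynomial `u(f,h)`. -/
noncomputable def uF (f h : ℝ) : ℝ :=
  170 * f * h + 91 * h ^ 2 + 195 * f * h ^ 2 + 69 * h ^ 3 + 75 * f * h ^ 3 + (75 / 4) * h ^ 4

/-- `Q = −t² − 6th(h + 1) − u(f,h)`. -/
noncomputable def QF (x y : ℝ) : ℝ :=
  -tF x y ^ 2 - 6 * tF x y * hF x y * (hF x y + 1) - uF (fF x y) (hF x y)

/-- For each fixed `y`, as `x → 0` (`x ≠ 0`) the curve `x ↦ (x⁻², yx³ + x²)`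
tends to infinity, while the Pinchuk map `F = (P,Q)` along it tends to the
finite limit `(y⁴ + 2y², −u(y⁴ + y², y²))`; hence every such point is an
asymptotic value of `F`. -/
theorem pinchuk_asymptotic_values (y : ℝ) :
    Tendsto (fun x : ℝ => (PF (x⁻¹ ^ 2) (y * x ^ 3 + x ^ 2),
        QF (x⁻¹ ^ 2) (y * x ^ 3 + x ^ 2)))
      (nhdsWithin 0 {(0 : ℝ)}ᶜ)
      (nhds (y ^ 4 + 2 * y ^ 2, -uF (y ^ 4 + y ^ 2) (y ^ 2))) ∧
    Tendsto (fun x : ℝ => ‖(x⁻¹ ^ 2, y * x ^ 3 + x ^ 2)‖)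
      (nhdsWithin 0 {(0 : ℝ)}ᶜ) atTop := by
  constructor
  · -- rewrite to polynomial
    set g : ℝ → ℝ × ℝ := fun x =>
      ((y + x) ^ 2 * (y ^ 2 + y * x + 1) + (y ^ 2 + y * x),
        -(y * x) ^ 2 - 6 * (y * x) * (y ^ 2 + y * x) * ((y ^ 2 + y * x) + 1)
          - uF ((y + x) ^ 2 * (y ^ 2 + y * x + 1)) (y ^ 2 + y * x)) with hg
    have heq : ∀ x ∈ ({(0:ℝ)}ᶜ : Set ℝ),
        (PF (x⁻¹ ^ 2) (y * x ^ 3 + x ^ 2), QF (x⁻¹ ^ 2) (y * x ^ 3 + x ^ 2)) = g x := by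
      intro x hx
      have hx0 : x ≠ 0 := hx
      simp only [hg, PF, QF, fF, hF, tF, uF, Prod.mk.injEq]
      constructor <;> field_simp <;> ring
    have hcont : Tendsto g (nhdsWithin 0 {(0:ℝ)}ᶜ)
        (nhds (y ^ 4 + 2 * y ^ 2, -uF (y ^ 4 + y ^ 2) (y ^ 2))) := by
      have : ContinuousAt g 0 := by
        simp only [hg, uF]
        fun_prop
      have h0 : g 0 = (y ^ 4 + 2 * y ^ 2, -uF (y ^ 4 + y ^ 2) (y ^ 2)) := by
        simp only [hg, uF]
        norm_num
        constructor <;> ring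
      exact h0 ▸ this.continuousWithinAt.tendsto
    exact hcont.congr' (by filter_upwards [self_mem_nhdsWithin] using fun x hx => (heq x hx).symm)
  · have h1 : Tendsto (fun x : ℝ => x ^ 2) (nhdsWithin 0 {(0:ℝ)}ᶜ)
        (nhdsWithin 0 (Set.Ioi 0)) := by
      apply tendsto_nhdsWithin_of_tendsto_nhds_of_eventually_within
      · simpa using ((continuous_pow 2).tendsto (0:ℝ)).mono_left nhdsWithin_le_nhds
      · filter_upwards [self_mem_nhdsWithin] with x hx
        exact pow_two_pos_of_ne_zero hx
    have h2 : Tendsto (fun x : ℝ => (x ^ 2)⁻¹) (nhdsWithin 0 {(0:ℝ)}ᶜ) atTop :=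
      tendsto_inv_nhdsGT_zero.comp h1
    apply tendsto_atTop_mono _ h2
    intro x
    calc (x ^ 2)⁻¹ = ‖x⁻¹ ^ 2‖ := by
          rw [← inv_pow]; exact (Real.norm_of_nonneg (by positivity)).symm
      _ ≤ ‖(x⁻¹ ^ 2, y * x ^ 3 + x ^ 2)‖ := norm_fst_le (x⁻¹ ^ 2, y * x ^ 3 + x ^ 2)
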